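/- arXiv:2305.05018 — 2 statements merged into one kernel-verified Lean document; each statement's English description precedes it below -/
import Mathlib

section
/- There is no continuous map L : S² → ℂ such that L(-z) = -L(z) for all z ∈ S² and L(z) ≠ 0 for all z ∈ S². -/
open Complex Set

/-- A continuous integer-valued function on `Icc a b` takes equal values at the endpoints. -/
lemma BU.intval_endpoints {f : ℝ → ℝ} {a b : ℝ} (hab : a ≤ b)
    (hf : ContinuousOn f (Icc a b)) (hint : ∀ t ∈ Icc a b, ∃ k : ℤ, f t = k) :
    f b = f a := by
  by_contra hne
  have ha : a ∈ Icc a b := ⟨le_rfl, hab⟩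
  have hb : b ∈ Icc a b := ⟨hab, le_rfl⟩
  obtain ⟨ka, hka⟩ := hint a ha
  obtain ⟨kb, hkb⟩ := hint b hb
  have parity : ∀ t ∈ Icc a b, ∀ m : ℤ, f t ≠ (m : ℝ) + 1/2 := by
    intro t ht m hm
    obtain ⟨k, hk⟩ := hint t ht
    rw [hk] at hm
    have : (2 * k : ℝ) = 2 * m + 1 := by linarith
    have : (2 * k : ℤ) = 2 * m + 1 := by exact_mod_cast this
    omega
  rcases lt_or_gt_of_ne hne with h | h
  · -- f b < f a
    have hkk : (kb : ℝ) < ka := by rw [← hka, ← hkb]; exact h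
    have hkk' : kb + 1 ≤ ka := by exact_mod_cast Int.add_one_le_iff.mpr (by exact_mod_cast hkk)
    have hc : (kb : ℝ) + 1/2 ∈ Icc (f b) (f a) := by
      rw [hka, hkb]
      have : (kb : ℝ) + 1 ≤ ka := by exact_mod_cast hkk'
      constructor <;> linarith
    obtain ⟨t, ht, hft⟩ := intermediate_value_Icc' hab hf hc
    exact parity t ht kb hft
  · have hkk : (ka : ℝ) < kb := by rw [← hka, ← hkb]; exact h
    have hkk' : ka + 1 ≤ kb := by exact_mod_cast Int.add_one_le_iff.mpr (by exact_mod_cast hkk)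
    have hc : (ka : ℝ) + 1/2 ∈ Icc (f a) (f b) := by
      rw [hka, hkb]
      have : (ka : ℝ) + 1 ≤ kb := by exact_mod_cast hkk'
      constructor <;> linarith
    obtain ⟨t, ht, hft⟩ := intermediate_value_Icc hab hf hc
    exact parity t ht ka hft

/-- A continuous function on `Icc a b` whose exponential is constant is itself constant
(at the endpoints). -/
lemma BU.endpoint_eq_of_exp_eq {d : ℝ → ℂ} {a b : ℝ} (hab : a ≤ b)
    (hd : ContinuousOn d (Icc a b))
    (hexp : ∀ t ∈ Icc a b, Complex.exp (d t) = Complex.exp (d a)) :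
    d b = d a := by
  have key : ∀ t ∈ Icc a b, ∃ k : ℤ, d t - d a = (k : ℂ) * (2 * Real.pi * I) := by
    intro t ht
    rw [← Complex.exp_eq_one_iff, Complex.exp_sub, hexp t ht, div_self (Complex.exp_ne_zero _)]
  set f : ℝ → ℝ := fun t => (d t - d a).im / (2 * Real.pi) with hf
  have him : ∀ (k : ℤ), ((k : ℂ) * (2 * (Real.pi : ℂ) * I)).im = k * (2 * Real.pi) := by
    intro k; simp
  have hval : ∀ t ∈ Icc a b, ∀ k : ℤ, d t - d a = (k : ℂ) * (2 * Real.pi * I) → f t = k := by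
    intro t ht k hk
    have h2π : (2 : ℝ) * Real.pi ≠ 0 := by positivity
    rw [hf]
    simp only [hk, him]
    field_simp
  have hint : ∀ t ∈ Icc a b, ∃ k : ℤ, f t = k := by
    intro t ht
    obtain ⟨k, hk⟩ := key t ht
    exact ⟨k, hval t ht k hk⟩
  have hfc : ContinuousOn f (Icc a b) :=
    (Complex.continuous_im.comp_continuousOn (hd.sub continuousOn_const)).div_const _
  have hba := BU.intval_endpoints hab hfc hint
  have hfa : f a = 0 := by simp [hf]
  obtain ⟨kb, hkb⟩ := key b ⟨hab, le_rfl⟩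
  have hfb : f b = kb := hval b ⟨hab, le_rfl⟩ kb hkb
  have : (kb : ℝ) = 0 := by rw [← hfb, hba, hfa]
  have : kb = 0 := by exact_mod_cast this
  rw [this] at hkb
  simpa [sub_eq_zero] using hkb

lemma BU.prod_div_telescope {f : ℕ → ℂ} (hf : ∀ j, f j ≠ 0) (N : ℕ) :
    ∏ j ∈ Finset.range N, (f (j + 1) / f j) = f N / f 0 := by
  induction N with
  | zero => simp [div_self (hf 0)]
  | succ n ih =>
    rw [Finset.prod_range_succ, ih, div_mul_div_comm, mul_comm (f n),
      mul_div_mul_right _ _ (hf n)]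


/-- Every nonvanishing continuous function on `ℝ` has a continuous logarithm on `[0,1]`. -/
lemma BU.exists_lift {g : ℝ → ℂ} (hg : Continuous g) (hne : ∀ t, g t ≠ 0) :
    ∃ h : ℝ → ℂ, ContinuousOn h (Icc 0 1) ∧ ∀ t ∈ Icc 0 1, Complex.exp (h t) = g t := by
  have hK : IsCompact (Icc (0 : ℝ) 1) := isCompact_Icc
  -- minimum of ‖g‖ on [0,1]
  obtain ⟨t₀, ht₀, hmin⟩ := hK.exists_isMinOn (nonempty_Icc.mpr zero_le_one)
    ((continuous_norm.comp hg).continuousOn)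
  have hm : 0 < ‖g t₀‖ := norm_pos_iff.mpr (hne t₀)
  -- uniform continuity
  have huc := hK.uniformContinuousOn_of_continuous hg.continuousOn
  rw [Metric.uniformContinuousOn_iff] at huc
  obtain ⟨δ, hδ, hδ'⟩ := huc _ hm
  obtain ⟨n, hn⟩ := exists_nat_one_div_lt hδ
  set N : ℕ := n + 1 with hN
  have hNpos : (0 : ℝ) < N := by positivity
  have key : ∀ a ∈ Icc (0:ℝ) 1, ∀ b ∈ Icc (0:ℝ) 1, |a - b| ≤ 1 / N → ‖g a - g b‖ < ‖g b‖ := by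
    intro a ha b hb hab
    have h1 : dist a b < δ := by
      rw [Real.dist_eq]
      calc |a - b| ≤ 1 / N := hab
        _ < δ := by exact_mod_cast hn
    have h2 : dist (g a) (g b) < ‖g t₀‖ := hδ' a ha b hb h1
    calc ‖g a - g b‖ = dist (g a) (g b) := (dist_eq_norm _ _).symm
      _ < ‖g t₀‖ := h2
      _ ≤ ‖g b‖ := hmin hb
  -- the subdivision points
  set r : ℕ → ℝ → ℂ := fun j t => g (min t ((j + 1) / N)) / g (min t (j / N)) with hr
  have hmem : ∀ t ∈ Icc (0:ℝ) 1, ∀ x : ℝ, 0 ≤ x → min t x ∈ Icc (0:ℝ) 1 :=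
    fun t ht x hx => ⟨le_min ht.1 hx, min_le_of_left_le ht.2⟩
  have hclose : ∀ t ∈ Icc (0:ℝ) 1, ∀ j : ℕ, ‖r j t - 1‖ < 1 := by
    intro t ht j
    set a := min t ((j + 1 : ℝ) / N)
    set b := min t ((j : ℝ) / N)
    have hja : (0:ℝ) ≤ (j + 1) / N := by positivity
    have hjb : (0:ℝ) ≤ (j : ℝ) / N := by positivity
    have hba : b ≤ a := min_le_min le_rfl (by gcongr <;> linarith)
    have hub : a ≤ b + 1 / N := by
      have : ((j : ℝ) + 1) / N = j / N + 1 / N := by ring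
      calc a ≤ min (t + 1 / N) ((j : ℝ) / N + 1 / N) := by
              rw [← this]; exact min_le_min (le_add_of_nonneg_right (by positivity)) le_rfl
        _ = b + 1 / N := by rw [← min_add_add_right]
    have habs : |a - b| ≤ 1 / N := abs_le.mpr ⟨by linarith [one_div_pos.mpr hNpos], by linarith⟩
    have hlt := key a (hmem t ht _ hja) b (hmem t ht _ hjb) habs
    have hgb : g b ≠ 0 := hne b
    have : r j t - 1 = (g a - g b) / g b := by
      rw [hr]; show g a / g b - 1 = (g a - g b) / g b; rw [div_sub_one hgb]
    rw [this, norm_div, div_lt_one (norm_pos_iff.mpr hgb)]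
    exact hlt
  have hrne : ∀ t, ∀ j : ℕ, r j t ≠ 0 := fun t j => div_ne_zero (hne _) (hne _)
  refine ⟨fun t => Complex.log (g 0) + ∑ j ∈ Finset.range N, Complex.log (r j t), ?_, ?_⟩
  · apply ContinuousOn.add continuousOn_const
    apply continuousOn_finset_sum
    intro j _
    intro t ht
    have hslit : r j t ∈ slitPlane := by
      apply ball_one_subset_slitPlane
      rw [Metric.mem_ball, dist_eq_norm]
      exact hclose t ht j
    have hrc : ContinuousAt (r j) t := by
      apply ContinuousAt.div
      · exact (hg.comp (continuous_id.min continuous_const)).continuousAt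
      · exact (hg.comp (continuous_id.min continuous_const)).continuousAt
      · exact hne _
    exact ((continuousAt_clog hslit).comp hrc).continuousWithinAt
  · intro t ht
    rw [Complex.exp_add, Complex.exp_sum]
    have h1 : ∀ j ∈ Finset.range N, Complex.exp (Complex.log (r j t)) = r j t :=
      fun j _ => Complex.exp_log (hrne t j)
    rw [Finset.prod_congr rfl h1, Complex.exp_log (hne 0)]
    -- telescoping
    have htel : ∏ j ∈ Finset.range N, r j t = g t / g 0 := by
      have := BU.prod_div_telescope (f := fun j => g (min t ((j : ℝ) / N))) (fun j => hne _) N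
      have heq : ∀ j ∈ Finset.range N, r j t
          = g (min t (((j + 1 : ℕ) : ℝ) / N)) / g (min t ((j : ℝ) / N)) := by
        intro j _; rw [hr]; push_cast; ring_nf
      rw [Finset.prod_congr rfl heq, this]
      have hN1 : ((N : ℝ)) / N = 1 := div_self (ne_of_gt hNpos)
      rw [hN1, Nat.cast_zero, zero_div, min_eq_left ht.2, min_eq_right ht.1]
    rw [htel, mul_div_cancel₀ _ (hne 0)]




/-- There is no continuous map `L : S² → ℂ` that is odd (`L (-z) = -L z`) and
nowhere vanishing (Borsuk–Ulam). -/
theorem no_continuous_odd_nonvanishing_sphere2_to_complex :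
    ¬ ∃ L : Metric.sphere (0 : EuclideanSpace ℝ (Fin 3)) 1 → ℂ,
      Continuous L ∧ (∀ z, L (-z) = -L z) ∧ (∀ z, L z ≠ 0) := by
  rintro ⟨L, hLc, hodd, hLne⟩
  -- clamped radius
  set σ : ℝ → ℝ := fun s => min (max s 0) 1 with hσ
  have hσ0 : ∀ s, 0 ≤ σ s := fun s => le_min (le_max_right s 0) zero_le_one
  have hσ1 : ∀ s, σ s ≤ 1 := fun s => min_le_right _ _
  have hσc : Continuous σ := (continuous_id.max continuous_const).min continuous_const
  -- coordinates
  set w : ℝ → ℝ → (Fin 3 → ℝ) := fun s t =>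
    ![σ s * Real.cos (2 * Real.pi * t), σ s * Real.sin (2 * Real.pi * t), Real.sqrt (1 - σ s ^ 2)] with hw
  set v : ℝ → ℝ → EuclideanSpace ℝ (Fin 3) := fun s t =>
    (EuclideanSpace.equiv (Fin 3) ℝ).symm (w s t) with hv
  have hsq : ∀ s, (0:ℝ) ≤ 1 - σ s ^ 2 := by
    intro s
    nlinarith [hσ0 s, hσ1 s]
  have hvmem : ∀ s t, v s t ∈ Metric.sphere (0 : EuclideanSpace ℝ (Fin 3)) 1 := by
    intro s t
    rw [mem_sphere_zero_iff_norm, EuclideanSpace.norm_eq]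
    have h1 : ∀ i, ‖(v s t) i‖ ^ 2 = (w s t i) ^ 2 := by
      intro i; rw [Real.norm_eq_abs, _root_.sq_abs]; rfl
    rw [Fin.sum_univ_three, h1 0, h1 1, h1 2]
    have : w s t 0 ^ 2 + w s t 1 ^ 2 + w s t 2 ^ 2 = 1 := by
      simp only [hw]
      simp only [Matrix.cons_val_zero, Matrix.cons_val_one, Matrix.head_cons,
        Matrix.cons_val_two, Matrix.tail_cons]
      rw [Real.sq_sqrt (hsq s)]
      nlinarith [Real.sin_sq_add_cos_sq (2 * Real.pi * t)]
    rw [this, Real.sqrt_one]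
  -- the map to ℂ
  set F : ℝ → ℝ → ℂ := fun s t => L ⟨v s t, hvmem s t⟩ with hF
  have hFne : ∀ s t, F s t ≠ 0 := fun s t => hLne _
  have hvc : Continuous fun p : ℝ × ℝ => v p.1 p.2 := by
    apply (EuclideanSpace.equiv (Fin 3) ℝ).symm.continuous.comp
    apply continuous_pi
    intro i
    fin_cases i
    · show Continuous fun p : ℝ × ℝ => σ p.1 * Real.cos (2 * Real.pi * p.2)
      fun_prop
    · show Continuous fun p : ℝ × ℝ => σ p.1 * Real.sin (2 * Real.pi * p.2)
      fun_prop
    · show Continuous fun p : ℝ × ℝ => Real.sqrt (1 - σ p.1 ^ 2)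
      fun_prop
  have hFc : Continuous fun p : ℝ × ℝ => F p.1 p.2 := by
    apply hLc.comp
    exact Continuous.subtype_mk (by exact hvc) _
  have hFsc : ∀ s, Continuous fun t => F s t := by
    intro s
    exact hFc.comp (continuous_const.prodMk continuous_id)
  -- F 0 is constant
  have hF0 : ∀ t, F 0 t = F 0 0 := by
    intro t
    have hσz : σ 0 = 0 := by simp [hσ]
    have : v 0 t = v 0 0 := by
      rw [hv]
      show (EuclideanSpace.equiv (Fin 3) ℝ).symm (w 0 t) = (EuclideanSpace.equiv (Fin 3) ℝ).symm (w 0 0)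
      refine congrArg _ ?_
      rw [hw]
      simp [hσz]
    simp only [hF]
    congr 1
    exact Subtype.ext this
  -- F is 1-periodic at the endpoints
  have hper : ∀ s, F s 1 = F s 0 := by
    intro s
    have : v s 1 = v s 0 := by
      rw [hv]
      show (EuclideanSpace.equiv (Fin 3) ℝ).symm (w s 1) = (EuclideanSpace.equiv (Fin 3) ℝ).symm (w s 0)
      refine congrArg _ ?_
      rw [hw]
      simp [Real.cos_two_pi, Real.sin_two_pi]
    simp only [hF]
    congr 1
    exact Subtype.ext this
  -- oddness on the equator
  have hodd1 : ∀ t, F 1 (t + 1/2) = -F 1 t := by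
    intro t
    have hσ1' : σ 1 = 1 := by simp [hσ]
    have hneg : v 1 (t + 1/2) = -(v 1 t) := by
      rw [hv]
      have harg : 2 * Real.pi * (t + 1/2) = 2 * Real.pi * t + Real.pi := by ring
      have : w 1 (t + 1/2) = -(w 1 t) := by
        funext i
        rw [Pi.neg_apply]
        fin_cases i
        · show σ 1 * Real.cos (2 * Real.pi * (t + 1/2)) = -(σ 1 * Real.cos (2 * Real.pi * t))
          rw [harg, Real.cos_add_pi]; ring
        · show σ 1 * Real.sin (2 * Real.pi * (t + 1/2)) = -(σ 1 * Real.sin (2 * Real.pi * t))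
          rw [harg, Real.sin_add_pi]; ring
        · show Real.sqrt (1 - σ 1 ^ 2) = -Real.sqrt (1 - σ 1 ^ 2)
          rw [hσ1']; norm_num
      show (EuclideanSpace.equiv (Fin 3) ℝ).symm (w 1 (t + 1/2))
          = -(EuclideanSpace.equiv (Fin 3) ℝ).symm (w 1 t)
      rw [this, map_neg]
    have : (⟨v 1 (t + 1/2), hvmem 1 (t + 1/2)⟩ : Metric.sphere (0 : EuclideanSpace ℝ (Fin 3)) 1)
        = -⟨v 1 t, hvmem 1 t⟩ := Subtype.ext (by rw [coe_neg_sphere]; exact hneg)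
    simp only [hF]
    rw [this, hodd]
  -- choose continuous logarithms of each loop `t ↦ F s t`
  have lifts : ∀ s : ℝ, ∃ h : ℝ → ℂ, ContinuousOn h (Icc 0 1) ∧
      ∀ t ∈ Icc 0 1, Complex.exp (h t) = F s t :=
    fun s => BU.exists_lift (hFsc s) (fun t => hFne s t)
  choose h hhc hhe using lifts
  set W : ℝ → ℂ := fun s => h s 1 - h s 0 with hW
  have h0mem : (0:ℝ) ∈ Icc (0:ℝ) 1 := ⟨le_rfl, zero_le_one⟩
  have Wuniq : ∀ s : ℝ, ∀ h' : ℝ → ℂ, ContinuousOn h' (Icc 0 1) →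
      (∀ t ∈ Icc 0 1, Complex.exp (h' t) = F s t) → W s = h' 1 - h' 0 := by
    intro s h' hc' he'
    have hdco : ContinuousOn (fun t => h s t - h' t) (Icc 0 1) := (hhc s).sub hc'
    have hconst : ∀ t ∈ Icc (0:ℝ) 1,
        Complex.exp (h s t - h' t) = Complex.exp (h s 0 - h' 0) := by
      intro t ht
      rw [Complex.exp_sub, Complex.exp_sub, hhe s t ht, he' t ht, hhe s 0 h0mem, he' 0 h0mem,
        div_self (hFne s t), div_self (hFne s 0)]
    have := BU.endpoint_eq_of_exp_eq zero_le_one hdco hconst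
    simp only [hW]
    linear_combination this
  -- `W 0 = 0`
  have hW0 : W 0 = 0 := by
    have := Wuniq 0 (fun _ => Complex.log (F 0 0)) continuousOn_const
      (fun t ht => by rw [Complex.exp_log (hFne 0 0), hF0 t])
    rw [this, sub_self]
  -- `W` is locally constant
  have hWlc : IsLocallyConstant W := by
    rw [IsLocallyConstant.iff_eventually_eq]
    intro s₀
    have hev : ∀ᶠ s in nhds s₀, ∀ t ∈ Icc (0:ℝ) 1, ‖F s t - F s₀ t‖ < ‖F s₀ t‖ := by
      apply isCompact_Icc.eventually_forall_of_forall_eventually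
      intro t _
      have hc : Continuous (fun z : ℝ × ℝ => ‖F z.1 z.2 - F s₀ z.2‖ - ‖F s₀ z.2‖) := by
        apply Continuous.sub
        · exact (hFc.sub (hFc.comp (continuous_const.prodMk continuous_snd))).norm
        · exact (hFc.comp (continuous_const.prodMk continuous_snd)).norm
      have hpos : 0 < ‖F s₀ t‖ := norm_pos_iff.mpr (hFne s₀ t)
      have h0 : (fun z : ℝ × ℝ => ‖F z.1 z.2 - F s₀ z.2‖ - ‖F s₀ z.2‖) (s₀, t) < 0 := by
        show ‖F s₀ t - F s₀ t‖ - ‖F s₀ t‖ < 0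
        rw [sub_self, norm_zero, zero_sub, neg_lt, neg_zero]
        exact hpos
      filter_upwards [hc.continuousAt.eventually_lt_const h0] with z hz
      linarith [hz]
    filter_upwards [hev] with s hs
    have hratio : ∀ t ∈ Icc (0:ℝ) 1, ‖F s t / F s₀ t - 1‖ < 1 := by
      intro t ht
      have heq : F s t / F s₀ t - 1 = (F s t - F s₀ t) / F s₀ t := by
        rw [sub_div, div_self (hFne s₀ t)]
      rw [heq, norm_div, div_lt_one (norm_pos_iff.mpr (hFne s₀ t))]
      exact hs t ht
    have hc' : ContinuousOn (fun t => h s₀ t + Complex.log (F s t / F s₀ t)) (Icc 0 1) := by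
      apply (hhc s₀).add
      intro t ht
      have hslit : F s t / F s₀ t ∈ slitPlane := by
        apply ball_one_subset_slitPlane
        rw [Metric.mem_ball, dist_eq_norm]
        exact hratio t ht
      have hca : ContinuousAt (fun t => F s t / F s₀ t) t :=
        ((hFsc s).continuousAt).div ((hFsc s₀).continuousAt) (hFne s₀ t)
      exact (hca.clog hslit).continuousWithinAt
    have he' : ∀ t ∈ Icc (0:ℝ) 1,
        Complex.exp (h s₀ t + Complex.log (F s t / F s₀ t)) = F s t := by
      intro t ht
      rw [Complex.exp_add, hhe s₀ t ht, Complex.exp_log (div_ne_zero (hFne s t) (hFne s₀ t)),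
        mul_comm, div_mul_cancel₀ _ (hFne s₀ t)]
    have := Wuniq s _ hc' he'
    rw [this, hper s, hper s₀]
    simp only [hW]
    ring
  -- hence `W 1 = 0`
  have hW1 : W 1 = 0 := by
    rw [← hW0]
    exact hWlc.apply_eq_of_preconnectedSpace 1 0
  -- but oddness forces `W 1 ≠ 0`
  have hmaps : Set.MapsTo (fun t : ℝ => t + 1/2) (Icc (0:ℝ) (1/2)) (Icc (0:ℝ) 1) := by
    intro t ht
    constructor
    · linarith [ht.1]
    · linarith [ht.2]
  have hsub : Icc (0:ℝ) (1/2) ⊆ Icc (0:ℝ) 1 := Icc_subset_Icc le_rfl (by norm_num)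
  have hdc : ContinuousOn (fun t => h 1 (t + 1/2) - h 1 t) (Icc 0 (1/2)) :=
    ((hhc 1).comp (continuous_add_right (1/2 : ℝ)).continuousOn hmaps).sub ((hhc 1).mono hsub)
  have hkey : ∀ t ∈ Icc (0:ℝ) (1/2), Complex.exp (h 1 (t + 1/2) - h 1 t) = -1 := by
    intro t ht
    rw [Complex.exp_sub, hhe 1 _ (hmaps ht), hhe 1 t (hsub ht), hodd1 t, neg_div,
      div_self (hFne 1 t)]
  have h0mem' : (0:ℝ) ∈ Icc (0:ℝ) (1/2) := ⟨le_rfl, by norm_num⟩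
  have h12mem : (1/2 : ℝ) ∈ Icc (0:ℝ) (1/2) := ⟨by norm_num, le_rfl⟩
  have hdexp : ∀ t ∈ Icc (0:ℝ) (1/2),
      Complex.exp (h 1 (t + 1/2) - h 1 t) = Complex.exp (h 1 (0 + 1/2) - h 1 0) := by
    intro t ht
    rw [hkey t ht, hkey 0 h0mem']
  have hd0 := BU.endpoint_eq_of_exp_eq (by norm_num : (0:ℝ) ≤ 1/2) hdc hdexp
  have e1 : (1:ℝ)/2 + 1/2 = 1 := by norm_num
  have e2 : (0:ℝ) + 1/2 = 1/2 := by norm_num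
  rw [e1, e2] at hd0
  -- hd0 : h 1 1 - h 1 (1/2) = h 1 (1/2) - h 1 0
  have hexp_d0 : Complex.exp (h 1 (1/2) - h 1 0) = -1 := by
    have := hkey 0 h0mem'
    rwa [e2] at this
  have hd0ne : h 1 (1/2) - h 1 0 ≠ 0 := by
    intro hz
    rw [hz, Complex.exp_zero] at hexp_d0
    norm_num at hexp_d0
  apply hd0ne
  have hW1' : h 1 1 - h 1 0 = 0 := hW1
  linear_combination (-1/2 : ℂ) * hd0 + (1/2 : ℂ) * hW1'
end

section
/- There is no continuous map f : S² → ℂ^{2m} such that ω(f(z), f(-z)) ≠ 0 for all z ∈ S², where ω is the standard symplectic form on ℂ^{2m}. -/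
open Matrix

/-- The standard symplectic matrix `Ω_m = [[0, Iₘ],[-Iₘ, 0]]`. -/
def standardSymplecticMatrix (𝕂 : Type*) [RCLike 𝕂] (m : ℕ) :
    Matrix (Fin (2 * m)) (Fin (2 * m)) 𝕂 :=
  fun i j => if (j : ℕ) = (i : ℕ) + m then 1 else if (i : ℕ) = (j : ℕ) + m then -1 else 0

/-- The standard symplectic form `ω(u,v) = uᵀ Ω_m v` on `𝕂^{2m}`. -/
def standardSymplecticForm (𝕂 : Type*) [RCLike 𝕂] (m : ℕ)
    (u v : Fin (2 * m) → 𝕂) : 𝕂 :=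
  u ⬝ᵥ (standardSymplecticMatrix 𝕂 m *ᵥ v)

lemma sympl_transpose (m : ℕ) :
    (standardSymplecticMatrix ℂ m)ᵀ = - standardSymplecticMatrix ℂ m := by
  ext i j
  have hi := i.isLt
  simp only [transpose_apply, Matrix.neg_apply, standardSymplecticMatrix]
  split_ifs
  all_goals try ring
  all_goals exfalso; omega

lemma sympl_antisymm (m : ℕ) (u v : Fin (2*m) → ℂ) :
    standardSymplecticForm ℂ m v u = - standardSymplecticForm ℂ m u v := by
  unfold standardSymplecticForm
  have h2 : standardSymplecticMatrix ℂ m *ᵥ v = -(v ᵥ* standardSymplecticMatrix ℂ m) := by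
    rw [← Matrix.vecMul_transpose, sympl_transpose, Matrix.vecMul_neg]
  rw [Matrix.dotProduct_mulVec, h2, dotProduct_neg, neg_neg, dotProduct_comm]

lemma sympl_continuous {X : Type*} [TopologicalSpace X] (m : ℕ)
    {u v : X → Fin (2*m) → ℂ} (hu : Continuous u) (hv : Continuous v) :
    Continuous fun x => standardSymplecticForm ℂ m (u x) (v x) := by
  unfold standardSymplecticForm dotProduct Matrix.mulVec
  dsimp only
  apply continuous_finset_sum
  intro i _
  exact ((continuous_apply i).comp hu).mul <| continuous_finset_sum _ fun j _ =>
    continuous_const.mul ((continuous_apply j).comp hv)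

lemma aux_telescope (h : ℕ → ℂ) (hne : ∀ k, h k ≠ 0) (n : ℕ) :
    ∏ k ∈ Finset.range n, (h (k+1) / h k) = h n / h 0 := by
  induction n with
  | zero => exact (div_self (hne 0)).symm
  | succ n ih =>
    rw [Finset.prod_range_succ, ih, div_mul_div_comm, mul_comm (h 0) (h n),
      mul_div_mul_left _ _ (hne n)]

lemma aux_int_eq {u : ℝ → ℝ} {a b : ℝ}
    (hu : ContinuousOn u (Set.uIcc a b))
    (hint : ∀ s ∈ Set.uIcc a b, ∃ k : ℤ, u s = k) : u a = u b := by
  by_contra hne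
  obtain ⟨k₁, hk₁⟩ := hint a Set.left_mem_uIcc
  obtain ⟨k₂, hk₂⟩ := hint b Set.right_mem_uIcc
  have hkne : k₁ ≠ k₂ := by rintro rfl; exact hne (hk₁.trans hk₂.symm)
  have hmm : ((min k₁ k₂ : ℤ) : ℝ) + 1/2 ∈ Set.uIcc (u a) (u b) := by
    rw [hk₁, hk₂, Set.mem_uIcc]
    have h1 : (min k₁ k₂ : ℤ) + 1 ≤ max k₁ k₂ := by omega
    have h1' : ((min k₁ k₂ : ℤ) : ℝ) + 1 ≤ ((max k₁ k₂ : ℤ) : ℝ) := by exact_mod_cast h1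
    rcases le_total k₁ k₂ with h | h
    · left
      rw [min_eq_left h] at h1' ⊢
      rw [max_eq_right h] at h1'
      constructor <;> linarith
    · right
      rw [min_eq_right h] at h1' ⊢
      rw [max_eq_left h] at h1'
      constructor <;> linarith
  obtain ⟨s, hsmem, hs⟩ := intermediate_value_uIcc hu hmm
  obtain ⟨k₃, hk₃⟩ := hint s hsmem
  rw [hk₃] at hs
  have h2 : (2*k₃ : ℝ) = 2*((min k₁ k₂ : ℤ) : ℝ) + 1 := by linarith
  have h3 : (2*k₃ : ℤ) = 2*(min k₁ k₂) + 1 := by exact_mod_cast h2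
  omega

open Real in
noncomputable def Epn (p : ℝ × ℝ) : EuclideanSpace ℝ (Fin 3) :=
  (EuclideanSpace.equiv (Fin 3) ℝ).symm
    ![Real.sin (π*p.2/2) * Real.cos p.1, Real.sin (π*p.2/2) * Real.sin p.1, Real.cos (π*p.2/2)]

open Real in
lemma Epn_mem (p : ℝ × ℝ) : Epn p ∈ Metric.sphere (0 : EuclideanSpace ℝ (Fin 3)) 1 := by
  rw [mem_sphere_zero_iff_norm]
  rw [EuclideanSpace.norm_eq]
  have h0 : ∀ i : Fin 3, (Epn p) i = ![Real.sin (π*p.2/2) * Real.cos p.1,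
      Real.sin (π*p.2/2) * Real.sin p.1, Real.cos (π*p.2/2)] i := fun i => rfl
  rw [show (√(∑ i, ‖Epn p i‖^2) : ℝ) = √(∑ i, ‖(![Real.sin (π*p.2/2) * Real.cos p.1,
      Real.sin (π*p.2/2) * Real.sin p.1, Real.cos (π*p.2/2)] : Fin 3 → ℝ) i‖^2) from by simp [h0]]
  rw [Fin.sum_univ_three]
  simp only [Matrix.cons_val_zero, Matrix.cons_val_one, Matrix.head_cons, Matrix.cons_val_two,
    Matrix.tail_cons, Real.norm_eq_abs, sq_abs]
  have h1 := Real.sin_sq_add_cos_sq (π*p.2/2)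
  have h2 := Real.sin_sq_add_cos_sq p.1
  rw [show (Real.sin (π*p.2/2) * Real.cos p.1)^2 + (Real.sin (π*p.2/2) * Real.sin p.1)^2
      + Real.cos (π*p.2/2)^2 = 1 from by nlinarith]
  exact Real.sqrt_one

lemma Epn_cont : Continuous Epn := by
  apply (EuclideanSpace.equiv (Fin 3) ℝ).symm.continuous.comp
  apply continuous_pi
  intro i
  fin_cases i <;> simp <;> fun_prop

open Real in
lemma Epn_zero (t : ℝ) : Epn (t, 0) = Epn (0, 0) := by
  unfold Epn; congr 1; funext i; fin_cases i <;> simp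

open Real in
lemma Epn_per (s : ℝ) : Epn (2*π, s) = Epn (0, s) := by
  unfold Epn; congr 1; funext i; fin_cases i <;> simp

open Real in
lemma Epn_odd (t : ℝ) : Epn (t + π, 1) = -Epn (t, 1) := by
  unfold Epn
  rw [← map_neg]
  congr 1
  funext i
  fin_cases i <;> simp [Real.cos_add_pi, Real.sin_add_pi]

set_option maxHeartbeats 1000000 in
open Real in
/-- There is no continuous map `f : S² → ℂ^{2m}` with `ω(f z, f (-z)) ≠ 0` for all `z`,
where `ω` is the standard symplectic form on `ℂ^{2m}`. -/
theorem no_continuous_symplectically_antipodal_sphere2 (m : ℕ) :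
    ¬ ∃ f : Metric.sphere (0 : EuclideanSpace ℝ (Fin 3)) 1 → (Fin (2 * m) → ℂ),
      Continuous f ∧ ∀ z, standardSymplecticForm ℂ m (f z) (f (-z)) ≠ 0 := by
  rintro ⟨f, hfc, hfo⟩
  set g : Metric.sphere (0 : EuclideanSpace ℝ (Fin 3)) 1 → ℂ :=
    fun z => standardSymplecticForm ℂ m (f z) (f (-z)) with hgdef
  have hgc : Continuous g := sympl_continuous m hfc (hfc.comp continuous_neg)
  have hgne : ∀ z, g z ≠ 0 := hfo
  have hgodd : ∀ z, g (-z) = - g z := by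
    intro z
    show standardSymplecticForm ℂ m (f (-z)) (f (-(-z))) = _
    rw [neg_neg]
    exact sympl_antisymm m (f z) (f (-z))
  set F : ℝ × ℝ → ℂ := fun p => g ⟨Epn p, Epn_mem p⟩ with hFdef
  have hFc : Continuous F := hgc.comp (Epn_cont.subtype_mk _)
  have hFne : ∀ p, F p ≠ 0 := fun p => hgne _
  have hF0 : ∀ t : ℝ, F (t, 0) = F (0, 0) := by
    intro t; simp only [hFdef]; congr 1; exact Subtype.ext (Epn_zero t)
  have hFper : ∀ s : ℝ, F (2*π, s) = F (0, s) := by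
    intro s; simp only [hFdef]; congr 1; exact Subtype.ext (Epn_per s)
  have hFodd : ∀ t : ℝ, F (t + π, 1) = - F (t, 1) := by
    intro t
    have hz : (⟨Epn (t+π, 1), Epn_mem _⟩ :
        Metric.sphere (0 : EuclideanSpace ℝ (Fin 3)) 1) = -⟨Epn (t, 1), Epn_mem _⟩ :=
      Subtype.ext (by rw [coe_neg_sphere]; exact Epn_odd t)
    simp only [hFdef]
    rw [hz, hgodd]
  -- the compact rectangle
  set R : Set (ℝ × ℝ) := Set.Icc (0:ℝ) (2*π) ×ˢ Set.Icc (0:ℝ) 1 with hRdef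
  have hRc : IsCompact R := isCompact_Icc.prod isCompact_Icc
  have hRne : R.Nonempty := ⟨(0,0), ⟨⟨le_refl _, by positivity⟩, le_refl _, zero_le_one⟩⟩
  obtain ⟨p₀, hp₀R, hp₀⟩ := hRc.exists_isMinOn hRne (continuous_norm.comp hFc).continuousOn
  set ε : ℝ := ‖F p₀‖ with hεdef
  have hε : 0 < ε := norm_pos_iff.mpr (hFne p₀)
  have hεle : ∀ q ∈ R, ε ≤ ‖F q‖ := fun q hq => hp₀ hq
  obtain ⟨δ, hδ, hδF⟩ := Metric.uniformContinuousOn_iff.mp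
    (hRc.uniformContinuousOn_of_continuous hFc.continuousOn) ε hε
  -- slit plane membership of ratios
  have key : ∀ x ∈ R, ∀ y ∈ R, dist x y < δ → F x / F y ∈ Complex.slitPlane := by
    intro x hx y hy hxy
    have h1 : ‖F x / F y - 1‖ < 1 := by
      rw [div_sub_one (hFne y), norm_div, div_lt_one (norm_pos_iff.mpr (hFne y))]
      calc ‖F x - F y‖ = dist (F x) (F y) := (dist_eq_norm _ _).symm
        _ < ε := hδF x hx y hy hxy
        _ ≤ ‖F y‖ := hεle y hy
    exact Complex.ball_one_subset_slitPlane (mem_ball_iff_norm.mpr h1)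
  -- choose subdivision
  obtain ⟨n₀, hn₀⟩ := exists_nat_one_div_lt hδ
  set N : ℕ := n₀ + 1 with hNdef
  have hNpos : (0:ℝ) < N := by positivity
  have hNδ : (1:ℝ)/N < δ := by exact_mod_cast hn₀
  -- points used
  have hmem2 : ∀ p ∈ R, ∀ c : ℝ, 0 ≤ c → (p.1, min p.2 c) ∈ R := by
    rintro p ⟨hp1, hp2⟩ c hc
    exact ⟨hp1, ⟨le_min hp2.1 hc, (min_le_left _ _).trans hp2.2⟩⟩
  have hstep : ∀ (k:ℕ), ((k:ℝ)+1)/N - (k:ℝ)/N = 1/N := fun k => by ring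
  have hdist : ∀ p : ℝ × ℝ, ∀ k : ℕ,
      dist ((p.1, min p.2 (((k:ℝ)+1)/N)) : ℝ × ℝ) (p.1, min p.2 ((k:ℝ)/N)) < δ := by
    intro p k
    have hle : (k:ℝ)/N ≤ ((k:ℝ)+1)/N := by gcongr; linarith
    have habs : |min p.2 (((k:ℝ)+1)/N) - min p.2 ((k:ℝ)/N)| ≤ 1/N := by
      rcases le_total p.2 ((k:ℝ)/N) with h | h
      · rw [min_eq_left h, min_eq_left (h.trans hle), sub_self, abs_zero]
        positivity
      · rw [min_eq_right h, abs_le]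
        have h1 : (k:ℝ)/N ≤ min p.2 (((k:ℝ)+1)/N) := le_min h hle
        have h2 : min p.2 (((k:ℝ)+1)/N) ≤ ((k:ℝ)+1)/N := min_le_right _ _
        have h3 := hstep k
        constructor <;> linarith
    calc dist ((p.1, min p.2 (((k:ℝ)+1)/N)) : ℝ × ℝ) (p.1, min p.2 ((k:ℝ)/N))
        = |min p.2 (((k:ℝ)+1)/N) - min p.2 ((k:ℝ)/N)| := by
          rw [Prod.dist_eq]; simp [Real.dist_eq]
      _ ≤ 1/N := habs
      _ < δ := hNδ
  -- the explicit logarithm lift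
  set L : ℝ × ℝ → ℂ := fun p =>
    Complex.log (F (p.1, 0)) + ∑ k ∈ Finset.range N,
      Complex.log (F (p.1, min p.2 (((k:ℝ)+1)/N)) / F (p.1, min p.2 ((k:ℝ)/N))) with hLdef
  have hcontmin : ∀ c : ℝ, Continuous fun p : ℝ × ℝ => F (p.1, min p.2 c) := by
    intro c
    exact hFc.comp (continuous_fst.prodMk (continuous_snd.min continuous_const))
  have hLcont : ContinuousOn L R := by
    apply ContinuousOn.add
    · have he : (fun p : ℝ × ℝ => Complex.log (F (p.1, 0)))
          = fun _ => Complex.log (F (0,0)) := funext fun p => by rw [hF0 p.1]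
      rw [he]; exact continuousOn_const
    · apply continuousOn_finset_sum
      intro k _
      intro p hp
      apply ContinuousAt.continuousWithinAt
      have hkN : ((k:ℝ))/N ≥ 0 := by positivity
      have hkN1 : (((k:ℝ))+1)/N ≥ 0 := by positivity
      exact ContinuousAt.clog ((hcontmin _).div (hcontmin _) (fun q => hFne _)).continuousAt
        (key _ (hmem2 p hp _ hkN1) _ (hmem2 p hp _ hkN) (hdist p k))
  have hminzero : ∀ c : ℝ, 0 ≤ c → min (0:ℝ) c = 0 := fun c hc => min_eq_left hc
  have hLexp : ∀ p ∈ R, Complex.exp (L p) = F p := by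
    rintro p ⟨⟨_, _⟩, hs0, hs1⟩
    simp only [hLdef]
    rw [Complex.exp_add, Complex.exp_sum, Complex.exp_log (hFne _)]
    have hcongr : ∀ k ∈ Finset.range N,
        Complex.exp (Complex.log (F (p.1, min p.2 (((k:ℝ)+1)/N)) / F (p.1, min p.2 ((k:ℝ)/N))))
        = (fun j : ℕ => F (p.1, min p.2 ((j:ℝ)/N))) (k+1) / (fun j : ℕ => F (p.1, min p.2 ((j:ℝ)/N))) k := by
      intro k _
      rw [Complex.exp_log (div_ne_zero (hFne _) (hFne _))]
      push_cast
      rfl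
    rw [Finset.prod_congr rfl hcongr,
      aux_telescope (fun j : ℕ => F (p.1, min p.2 ((j:ℝ)/N))) (fun k => hFne _) N]
    have e0 : ((0:ℕ):ℝ)/N = 0 := by simp
    have eN : ((N:ℕ):ℝ)/N = 1 := by field_simp
    rw [e0, eN, min_eq_right hs0, min_eq_left hs1]
    rw [mul_comm, div_mul_cancel₀ _ (hFne _)]
  -- the boundary difference along the homotopy
  have hmemL : ∀ s ∈ Set.Icc (0:ℝ) 1, ((2*π, s) : ℝ×ℝ) ∈ R ∧ (((0:ℝ), s) : ℝ×ℝ) ∈ R := by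
    intro s hs
    exact ⟨⟨⟨by positivity, le_refl _⟩, hs⟩, ⟨⟨le_refl _, by positivity⟩, hs⟩⟩
  set w : ℝ → ℂ := fun s => L (2*π, s) - L (0, s) with hwdef
  have hwc : ContinuousOn w (Set.Icc 0 1) := by
    apply ContinuousOn.sub
    · exact hLcont.comp (Continuous.continuousOn (by fun_prop)) fun s hs => (hmemL s hs).1
    · exact hLcont.comp (Continuous.continuousOn (by fun_prop)) fun s hs => (hmemL s hs).2
  have hwexp : ∀ s ∈ Set.Icc (0:ℝ) 1, Complex.exp (w s) = 1 := by
    intro s hs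
    simp only [hwdef]
    rw [Complex.exp_sub, hLexp _ (hmemL s hs).1, hLexp _ (hmemL s hs).2, hFper s,
      div_self (hFne _)]
  have hw0 : w 0 = 0 := by
    have hLz : ∀ t : ℝ, L (t, 0) = Complex.log (F (0,0)) := by
      intro t
      simp only [hLdef]
      have hz : ∀ k ∈ Finset.range N,
          Complex.log (F (t, min (0:ℝ) (((k:ℝ)+1)/N)) / F (t, min (0:ℝ) ((k:ℝ)/N))) = 0 := by
        intro k _
        rw [min_eq_left (by positivity), min_eq_left (by positivity), div_self (hFne _),
          Complex.log_one]
      rw [Finset.sum_congr rfl hz, Finset.sum_const_zero, add_zero, hF0 t]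
    simp only [hwdef, hLz, sub_self]
  have him : ∀ (k : ℤ) (x : ℂ), x = k * (2*π*Complex.I) → x.im = k * (2*π) := by
    intro k x h
    rw [h]
    simp [Complex.mul_im]
  have hw1 : w 1 = 0 := by
    have h01 : (1:ℝ) ∈ Set.Icc (0:ℝ) 1 := by constructor <;> norm_num
    have hint : ∀ s ∈ Set.uIcc (0:ℝ) 1, ∃ k : ℤ, (w s).im / (2*π) = k := by
      intro s hs
      rw [Set.uIcc_of_le zero_le_one] at hs
      obtain ⟨k, hk⟩ := Complex.exp_eq_one_iff.mp (hwexp s hs)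
      refine ⟨k, ?_⟩
      rw [him k _ hk]
      field_simp
    have huc : ContinuousOn (fun s => (w s).im / (2*π)) (Set.uIcc (0:ℝ) 1) := by
      rw [Set.uIcc_of_le zero_le_one]
      exact (Complex.continuous_im.comp_continuousOn hwc).div_const _
    have heq := aux_int_eq huc hint
    simp only [hw0, Complex.zero_im, zero_div] at heq
    obtain ⟨k, hk⟩ := Complex.exp_eq_one_iff.mp (hwexp 1 h01)
    have h2 : (w 1).im = 0 := by
      have h3 : (w 1).im / (2*π) = 0 := heq.symm
      have hπ := Real.pi_ne_zero
      field_simp at h3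
      exact h3.trans (mul_zero _)
    rw [him k _ hk] at h2
    have hk0 : (k:ℝ) = 0 := by
      have hπ := Real.pi_pos
      rcases mul_eq_zero.mp h2 with h | h
      · exact h
      · linarith
    rw [hk, show (k:ℂ) = 0 from by exact_mod_cast hk0]
    ring
  -- oddness along the equator
  have hmemV : ∀ t ∈ Set.Icc (0:ℝ) π, ((t+π, (1:ℝ)) : ℝ×ℝ) ∈ R ∧ ((t, (1:ℝ)) : ℝ×ℝ) ∈ R := by
    intro t ht
    have hπ := Real.pi_pos
    obtain ⟨ht1, ht2⟩ := ht
    exact ⟨⟨⟨by show (0:ℝ) ≤ t + π; linarith, by show t + π ≤ 2*π; linarith⟩, by norm_num⟩,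
           ⟨⟨ht1, by show t ≤ 2*π; linarith⟩, by norm_num⟩⟩
  set v : ℝ → ℂ := fun t => L (t+π, 1) - L (t, 1) with hvdef
  have hvc : ContinuousOn v (Set.Icc 0 π) := by
    apply ContinuousOn.sub
    · exact hLcont.comp (Continuous.continuousOn (by fun_prop)) fun t ht => (hmemV t ht).1
    · exact hLcont.comp (Continuous.continuousOn (by fun_prop)) fun t ht => (hmemV t ht).2
  have hvexp : ∀ t ∈ Set.Icc (0:ℝ) π, Complex.exp (v t) = -1 := by
    intro t ht
    simp only [hvdef]
    rw [Complex.exp_sub, hLexp _ (hmemV t ht).1, hLexp _ (hmemV t ht).2, hFodd t, neg_div,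
      div_self (hFne _)]
  have hvint : ∀ t ∈ Set.Icc (0:ℝ) π, ∃ k : ℤ, v t = (2*(k:ℂ)+1) * π * Complex.I := by
    intro t ht
    have h1 : Complex.exp (v t - π*Complex.I) = 1 := by
      rw [Complex.exp_sub, hvexp t ht, Complex.exp_pi_mul_I]
      norm_num
    obtain ⟨k, hk⟩ := Complex.exp_eq_one_iff.mp h1
    exact ⟨k, by linear_combination hk⟩
  have hvim : ∀ t ∈ Set.Icc (0:ℝ) π, ∃ k : ℤ, (v t).im = (2*(k:ℝ)+1) * π := by
    intro t ht
    obtain ⟨k, hk⟩ := hvint t ht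
    refine ⟨k, ?_⟩
    rw [hk]
    simp [Complex.mul_im, Complex.add_im, Complex.add_re]
  have hπpos := Real.pi_pos
  have heq2 : (v 0).im / π = (v π).im / π := by
    have hc2 : ContinuousOn (fun t => (v t).im / π) (Set.uIcc (0:ℝ) π) := by
      rw [Set.uIcc_of_le hπpos.le]
      exact (Complex.continuous_im.comp_continuousOn hvc).div_const _
    have hint2 : ∀ t ∈ Set.uIcc (0:ℝ) π, ∃ k : ℤ, (v t).im / π = k := by
      intro t ht
      rw [Set.uIcc_of_le hπpos.le] at ht
      obtain ⟨k, hk⟩ := hvim t ht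
      refine ⟨2*k+1, ?_⟩
      rw [hk, mul_div_cancel_right₀ _ Real.pi_ne_zero]
      push_cast
      ring
    exact aux_int_eq hc2 hint2
  have hsum : v π + v 0 = w 1 := by
    simp only [hvdef, hwdef]
    rw [show π + π = 2*π from by ring, zero_add]
    ring
  have hvπ : (v π).im = -(v 0).im := by
    have h5 : v π + v 0 = 0 := by rw [hsum, hw1]
    have := congrArg Complex.im h5
    simp only [Complex.add_im, Complex.zero_im] at this
    linarith
  have hv00 : (v 0).im = 0 := by
    have h6 : (v 0).im / π = -((v 0).im) / π := by rw [heq2, hvπ]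
    field_simp at h6
    linarith
  obtain ⟨k, hk⟩ := hvim 0 ⟨le_refl _, hπpos.le⟩
  rw [hv00] at hk
  have h7 : (2*(k:ℝ)+1) = 0 := by
    rcases mul_eq_zero.mp hk.symm with h | h
    · exact h
    · linarith
  have h8 : (2*k+1 : ℤ) = 0 := by exact_mod_cast h7
  omega
end
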